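/- For distinct parameters ξ_α, ξ_β, ξ_γ and rates b_i, b_k with appropriate nonvanishing conditions, the 3×3 matrices satisfy the Yang–Baxter-type identity: [[S_{γβ}(k), T_{γβ}(k), 0],[0,-1,0],[0,0,S_{γβ}(i)]] · [[S_{γα}(i),0,0],[0,S_{γα}(k),T_{γα}(k)],[0,0,-1]] · [[S_{βα}(k),T_{βα}(k),0],[0,-1,0],[0,0,S_{βα}(i)]] = [[S_{βα}(i),0,0],[0,S_{βα}(k),T_{βα}(k)],[0,0,-1]] · [[S_{γα}(k),T_{γα}(k),0],[0,-1,0],[0,0,S_{γα}(i)]] · [[S_{γβ}(i),0,0],[0,S_{γβ}(k),T_{γβ}(k)],[0,0,-1]]. -/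

import Mathlib

noncomputable def S3 (b u v : ℂ) : ℂ := -(1 - b * u) / (1 - b * v)
noncomputable def T3 (b u v : ℂ) : ℂ := b * (u - v) / (1 - b * v)

set_option maxHeartbeats 8000000 in
/-- Yang–Baxter-type identity for the 3×3 blocks (case i = j > k). -/
theorem stmt_3 (bi bk ξα ξβ ξγ : ℂ)
    (hiα : 1 - bi * ξα ≠ 0) (hiβ : 1 - bi * ξβ ≠ 0) (hiγ : 1 - bi * ξγ ≠ 0)
    (hkα : 1 - bk * ξα ≠ 0) (hkβ : 1 - bk * ξβ ≠ 0) (hkγ : 1 - bk * ξγ ≠ 0) :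
    !![S3 bk ξγ ξβ, T3 bk ξγ ξβ, 0; 0, -1, 0; 0, 0, S3 bi ξγ ξβ] *
    !![S3 bi ξγ ξα, 0, 0; 0, S3 bk ξγ ξα, T3 bk ξγ ξα; 0, 0, -1] *
    !![S3 bk ξβ ξα, T3 bk ξβ ξα, 0; 0, -1, 0; 0, 0, S3 bi ξβ ξα] =
    !![S3 bi ξβ ξα, 0, 0; 0, S3 bk ξβ ξα, T3 bk ξβ ξα; 0, 0, -1] *
    !![S3 bk ξγ ξα, T3 bk ξγ ξα, 0; 0, -1, 0; 0, 0, S3 bi ξγ ξα] *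
    !![S3 bi ξγ ξβ, 0, 0; 0, S3 bk ξγ ξβ, T3 bk ξγ ξβ; 0, 0, -1] := by
  have hiα' : 1 - ξα * bi ≠ 0 := by rwa [mul_comm]
  have hiβ' : 1 - ξβ * bi ≠ 0 := by rwa [mul_comm]
  have hiγ' : 1 - ξγ * bi ≠ 0 := by rwa [mul_comm]
  have hkα' : 1 - ξα * bk ≠ 0 := by rwa [mul_comm]
  have hkβ' : 1 - ξβ * bk ≠ 0 := by rwa [mul_comm]
  have hkγ' : 1 - ξγ * bk ≠ 0 := by rwa [mul_comm]
  simp only [Matrix.mul_fin_three]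
  ext i j
  fin_cases i <;> fin_cases j <;>
    simp only [Matrix.cons_val', Matrix.cons_val_zero, Matrix.cons_val_one, Matrix.head_cons,
      Matrix.head_fin_const, Matrix.empty_val', Matrix.cons_val_fin_one, Matrix.of_apply,
      Matrix.cons_val_two, Matrix.tail_cons, S3, T3, Fin.isValue, Fin.reduceFinMk] <;>
    field_simp <;> ring
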